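/- arXiv:2601.10868 — 3 statements merged into one kernel-verified Lean document; each statement's English description precedes it below -/
import Mathlib

section
/- Let P, Q be real symmetric n×n matrices with Q ≻ 0, P ⪰ 0, and P ⪰ P·Q·P. Then P ⪯ Q⁻¹. -/
open Matrix
open scoped MatrixOrder

/-- If `Q ≻ 0`, `P ⪰ 0`, and `P ⪰ P·Q·P`, then `P ⪯ Q⁻¹`. -/
theorem psd_le_inv_of_PQP {n : ℕ} (P Q : Matrix (Fin n) (Fin n) ℝ)
    (hQ : Q.PosDef) (hP : P.PosSemidef)
    (h : (P - P * Q * P).PosSemidef) :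
    (Q⁻¹ - P).PosSemidef := by
  set S := CFC.sqrt Q with hSdef
  have hS : S.PosSemidef := (CFC.sqrt_nonneg Q).posSemidef
  have hSS : S * S = Q := CFC.sqrt_mul_sqrt_self Q hQ.posSemidef.nonneg
  have hSH : Sᴴ = S := hS.1
  have hdet : IsUnit S.det := by
    have : S.det * S.det = Q.det := by rw [← det_mul, hSS]
    have hQd : Q.det ≠ 0 := hQ.det_pos.ne'
    have : S.det ≠ 0 := fun h0 => hQd (by rw [← this, h0, mul_zero])
    exact this.isUnit
  have hinv : S⁻¹ * S = 1 := nonsing_inv_mul S hdet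
  have hinv' : S * S⁻¹ = 1 := mul_nonsing_inv S hdet
  set M := S * P * S with hM
  -- M - M*M is psd
  have h1 : (M - M * M).PosSemidef := by
    have : M - M * M = S * (P - P * Q * P) * Sᴴ := by
      rw [hSH, hM, ← hSS]
      noncomm_ring
    rw [this]
    exact h.mul_mul_conjTranspose_same S
  -- (1 - M) is Hermitian
  have hMH : (1 - M).IsHermitian := by
    have : Mᴴ = M := by
      rw [hM, conjTranspose_mul, conjTranspose_mul, hSH, hP.1, mul_assoc]
    exact (isHermitian_one).sub this
  have h2 : ((1 - M)ᴴ * (1 - M)).PosSemidef := posSemidef_conjTranspose_mul_self _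
  have h3 : (1 - M).PosSemidef := by
    have key : 1 - M = (M - M * M) + (1 - M)ᴴ * (1 - M) := by
      rw [hMH.eq]
      noncomm_ring
    rw [key]
    exact h1.add h2
  -- conjugate by S⁻¹
  have h4 : (S⁻¹ * (1 - M) * (S⁻¹)ᴴ).PosSemidef := h3.mul_mul_conjTranspose_same S⁻¹
  have hSinvH : (S⁻¹)ᴴ = S⁻¹ := by rw [conjTranspose_nonsing_inv, hSH]
  have heq : S⁻¹ * (1 - M) * (S⁻¹)ᴴ = Q⁻¹ - P := by
    rw [hSinvH, hM, ← hSS, Matrix.mul_inv_rev]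
    rw [mul_sub, sub_mul, mul_one]
    congr 1
    rw [show S⁻¹ * (S * P * S) = P * S by rw [← mul_assoc, ← mul_assoc, hinv, one_mul],
      mul_assoc, hinv', mul_one]
  rw [← heq]
  exact h4
end

section
/- Let P, Q, R be real symmetric matrices with Q ≻ 0, R ≻ 0, and let F be an m×n real matrix. If P ⪰ P·Q·P + F'·R·F, then ‖F‖ ≤ ‖R^{-1/2}‖ · √‖Q⁻¹‖, where ‖·‖ denotes the induced operator 2-norm. -/
open Matrix
open scoped Matrix.Norms.L2Operator RealInnerProductSpace

/-- The positive semidefinite square root of a positive semidefinite matrix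
(the definition removed from Mathlib, restated with its old meaning). -/
noncomputable def Matrix.PosSemidef.sqrt {n : Type*} [Fintype n] [DecidableEq n]
    {A : Matrix n n ℝ} (hA : A.PosSemidef) : Matrix n n ℝ :=
  (hA.1.eigenvectorUnitary : Matrix n n ℝ) *
    diagonal ((RCLike.ofReal : ℝ → ℝ) ∘ Real.sqrt ∘ hA.1.eigenvalues) *
    (star hA.1.eigenvectorUnitary : Matrix n n ℝ)

/-- If `P ⪰ 0`, `Q ≻ 0`, `R ≻ 0`, and `P ⪰ P·Q·P + Fᵀ·R·F`, then
`‖F‖ ≤ ‖R^{-1/2}‖ · √‖Q⁻¹‖` in the induced operator 2-norm. -/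
theorem gain_norm_bound {n m : ℕ}
    (P Q : Matrix (Fin n) (Fin n) ℝ) (R : Matrix (Fin m) (Fin m) ℝ)
    (F : Matrix (Fin m) (Fin n) ℝ)
    (hP : P.PosSemidef) (hQ : Q.PosDef) (hR : R.PosDef)
    (h : (P - P * Q * P - Fᵀ * R * F).PosSemidef) :
    ‖F‖ ≤ ‖(PosSemidef.sqrt hR.posSemidef)⁻¹‖ * Real.sqrt ‖Q⁻¹‖ := by
  classical
  set S := PosSemidef.sqrt hR.posSemidef with hSdef
  have hS : S.PosSemidef := by
    rw [hSdef, PosSemidef.sqrt, star_eq_conjTranspose]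
    apply PosSemidef.mul_mul_conjTranspose_same
    rw [posSemidef_diagonal_iff]
    intro i
    exact Real.sqrt_nonneg _
  have hSS : S * S = R := by
    have hU : star (hR.1.eigenvectorUnitary : Matrix (Fin m) (Fin m) ℝ) *
        (hR.1.eigenvectorUnitary : Matrix (Fin m) (Fin m) ℝ) = 1 :=
      Unitary.star_mul_self_of_mem hR.1.eigenvectorUnitary.2
    conv_rhs => rw [hR.1.spectral_theorem, Unitary.conjStarAlgAut_apply]
    rw [hSdef, PosSemidef.sqrt]
    simp only [Matrix.mul_assoc]
    rw [← Matrix.mul_assoc _ _ (diagonal _ * _), hU, Matrix.one_mul, ← Matrix.mul_assoc (diagonal _),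
      diagonal_mul_diagonal]
    congr 3
    funext i
    simp only [Function.comp_apply, RCLike.ofReal_real_eq_id, id]
    exact Real.mul_self_sqrt (hR.posSemidef.eigenvalues_nonneg i)
  -- S is invertible
  have hSdet : IsUnit S.det := by
    have : S.det * S.det = R.det := by rw [← det_mul, hSS]
    have hRdet := hR.det_pos
    have : S.det ≠ 0 := by
      intro h0
      rw [h0, mul_zero] at this
      exact hRdet.ne this
    exact this.isUnit
  have hSinv : S⁻¹ * S = 1 := S.nonsing_inv_mul hSdet
  have hQdet : IsUnit Q.det := hQ.det_pos.ne'.isUnit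
  have e1 : Q * Q⁻¹ = 1 := Q.mul_nonsing_inv hQdet
  have e2 : Q⁻¹ * Q = 1 := Q.nonsing_inv_mul hQdet
  have hQi : (Q⁻¹).PosDef := hQ.inv
  -- key algebraic identity
  have hT : ((P - Q⁻¹)ᴴ * Q * (P - Q⁻¹)).PosSemidef :=
    hQ.posSemidef.conjTranspose_mul_mul_same _
  have hHerm : (P - Q⁻¹)ᴴ = P - Q⁻¹ := hP.1.sub hQi.1
  have hkey : (Q⁻¹ - Fᵀ * R * F).PosSemidef := by
    have hsum := (hT.add hP).add h
    have : (P - Q⁻¹)ᴴ * Q * (P - Q⁻¹) + P + (P - P * Q * P - Fᵀ * R * F)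
        = Q⁻¹ - Fᵀ * R * F := by
      rw [hHerm]
      have expand : (P - Q⁻¹) * Q * (P - Q⁻¹)
          = P * Q * P - P * (Q * Q⁻¹) - Q⁻¹ * Q * P + Q⁻¹ * Q * Q⁻¹ := by
        noncomm_ring
      rw [expand, e1, e2]
      noncomm_ring
    rwa [this] at hsum
  -- quadratic form bound: ∀ v, (F v)ᵀ R (F v) ≤ vᵀ Q⁻¹ v
  have hquad : ∀ v : Fin n → ℝ, v ⬝ᵥ ((Fᵀ * R * F) *ᵥ v) ≤ v ⬝ᵥ (Q⁻¹ *ᵥ v) := by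
    intro v
    have := hkey.re_dotProduct_nonneg v
    simp only [RCLike.re_to_real, star_trivial, sub_mulVec, dotProduct_sub] at this
    linarith
  -- norm bound pointwise
  rw [Matrix.l2_opNorm_def]
  apply ContinuousLinearMap.opNorm_le_bound
  · positivity
  intro x
  show ‖(EuclideanSpace.equiv (Fin m) ℝ).symm (F *ᵥ x)‖ ≤ _
  have hFx : (F *ᵥ (x : Fin n → ℝ)) = S⁻¹ *ᵥ (S *ᵥ (F *ᵥ x)) := by
    rw [mulVec_mulVec, mulVec_mulVec, hSinv, Matrix.one_mul]
  -- let z := S *ᵥ (F *ᵥ x)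
  set z : EuclideanSpace ℝ (Fin m) := (EuclideanSpace.equiv (Fin m) ℝ).symm (S *ᵥ (F *ᵥ x)) with hz
  have step1 : ‖(EuclideanSpace.equiv (Fin m) ℝ).symm (F *ᵥ (x : Fin n → ℝ))‖ ≤ ‖S⁻¹‖ * ‖z‖ := by
    rw [hFx]
    exact S⁻¹.l2_opNorm_mulVec z
  -- general dot product identity
  have hdp : ∀ {k l : ℕ} (M : Matrix (Fin k) (Fin l) ℝ) (a : Fin l → ℝ) (b : Fin k → ℝ),
      (M *ᵥ a) ⬝ᵥ b = a ⬝ᵥ (Mᵀ *ᵥ b) := by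
    intro k l M a b
    rw [Matrix.dotProduct_mulVec, Matrix.vecMul_transpose]
  -- ‖z‖² = xᵀ (FᵀRF) x
  have hz2 : ‖z‖ ^ 2 = (x : Fin n → ℝ) ⬝ᵥ ((Fᵀ * R * F) *ᵥ x) := by
    have h0 : ‖z‖ ^ 2 = ⟪z, z⟫ := (real_inner_self_eq_norm_sq z).symm
    have h1 : ⟪z, z⟫ = (S *ᵥ (F *ᵥ (x : Fin n → ℝ))) ⬝ᵥ (S *ᵥ (F *ᵥ x)) := by
      rw [EuclideanSpace.inner_eq_star_dotProduct]
      rfl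
    have hSt : Sᵀ = S := hS.1
    rw [h0, h1, hdp S, mulVec_mulVec, hSt, hSS, hdp F]
    rw [mulVec_mulVec, mulVec_mulVec]
  -- xᵀ Q⁻¹ x ≤ ‖Q⁻¹‖ ‖x‖²
  have hQbound : (x : Fin n → ℝ) ⬝ᵥ (Q⁻¹ *ᵥ x) ≤ ‖Q⁻¹‖ * ‖x‖ ^ 2 := by
    have hinner : (x : Fin n → ℝ) ⬝ᵥ (Q⁻¹ *ᵥ x)
        = ⟪x, (EuclideanSpace.equiv (Fin n) ℝ).symm (Q⁻¹ *ᵥ x)⟫ := by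
      rw [EuclideanSpace.inner_eq_star_dotProduct, dotProduct_comm]
      rfl
    rw [hinner]
    calc ⟪x, (EuclideanSpace.equiv (Fin n) ℝ).symm (Q⁻¹ *ᵥ x)⟫
        ≤ ‖x‖ * ‖(EuclideanSpace.equiv (Fin n) ℝ).symm (Q⁻¹ *ᵥ x)‖ := real_inner_le_norm _ _
      _ ≤ ‖x‖ * (‖Q⁻¹‖ * ‖x‖) := by
          gcongr
          exact Q⁻¹.l2_opNorm_mulVec x
      _ = ‖Q⁻¹‖ * ‖x‖ ^ 2 := by ring
  have hz_le : ‖z‖ ≤ Real.sqrt ‖Q⁻¹‖ * ‖x‖ := by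
    have h1 : ‖z‖ ^ 2 ≤ ‖Q⁻¹‖ * ‖x‖ ^ 2 := by
      rw [hz2]; exact (hquad x).trans hQbound
    have h2 : ‖z‖ = Real.sqrt (‖z‖ ^ 2) := by
      rw [Real.sqrt_sq (norm_nonneg _)]
    rw [h2]
    calc Real.sqrt (‖z‖ ^ 2) ≤ Real.sqrt (‖Q⁻¹‖ * ‖x‖ ^ 2) := Real.sqrt_le_sqrt h1
      _ = Real.sqrt ‖Q⁻¹‖ * ‖x‖ := by
          rw [Real.sqrt_mul (norm_nonneg _), Real.sqrt_sq (norm_nonneg _)]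
  calc ‖(EuclideanSpace.equiv (Fin m) ℝ).symm (F *ᵥ (x : Fin n → ℝ))‖
      ≤ ‖S⁻¹‖ * ‖z‖ := step1
    _ ≤ ‖S⁻¹‖ * (Real.sqrt ‖Q⁻¹‖ * ‖x‖) := by gcongr
    _ = ‖S⁻¹‖ * Real.sqrt ‖Q⁻¹‖ * ‖x‖ := by ring
end

section
/- Quadratic cost bound for stable closed loop: under the hypotheses ‖Ā^j‖ ≤ c·ρ^j (c>0, 0<ρ<1), x_{i+1} = Ā·x_i + G·w_i, Σ_j ‖w_j‖² ≤ α, and Q̄ ⪰ 0 symmetric, the total cost satisfies Σ_{i=0}^{∞} x_i'·Q̄·x_i ≤ (2‖Q̄‖c²/(1−ρ²))·‖x_0‖² + (2c²‖G‖²‖Q̄‖/(1−ρ)²)·α. -/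
open Matrix
open scoped Matrix.Norms.L2Operator

private lemma geo_le {ρ : ℝ} (h0 : 0 ≤ ρ) (h1 : ρ < 1) (m : ℕ) :
    ∑ k ∈ Finset.range m, ρ ^ k ≤ 1 / (1 - ρ) := by
  have hpm : 0 ≤ ρ ^ m := pow_nonneg h0 m
  have hd : 0 < 1 - ρ := by linarith
  rw [geom_sum_eq h1.ne]
  have heq : (ρ ^ m - 1) / (ρ - 1) = (1 - ρ ^ m) / (1 - ρ) := by
    rw [← neg_sub 1 (ρ ^ m), ← neg_sub 1 ρ, neg_div_neg_eq]
  rw [heq]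
  gcongr
  linarith

/-- Quadratic cost bound for a stable closed loop: if `‖Ā^j‖ ≤ c ρ^j`,
`x_{i+1} = Ā x_i + G w_i`, `Σ_j ‖w_j‖² ≤ α`, and `Q̄ ⪰ 0` symmetric, then
`Σ_i x_i' Q̄ x_i ≤ (2‖Q̄‖c²/(1−ρ²))‖x_0‖² + (2c²‖G‖²‖Q̄‖/(1−ρ)²) α`. -/
theorem closed_loop_cost_bound {n q : ℕ}
    (Abar Qbar : Matrix (Fin n) (Fin n) ℝ) (G : Matrix (Fin n) (Fin q) ℝ)
    (c ρ α : ℝ) (hc : 0 < c) (hρ0 : 0 < ρ) (hρ1 : ρ < 1) (hα : 0 < α)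
    (hQ : Qbar.PosSemidef)
    (hpow : ∀ j : ℕ, ‖Abar ^ j‖ ≤ c * ρ ^ j)
    (x : ℕ → EuclideanSpace ℝ (Fin n)) (w : ℕ → EuclideanSpace ℝ (Fin q))
    (hrec : ∀ i, x (i + 1) =
      (EuclideanSpace.equiv (Fin n) ℝ).symm (Abar *ᵥ x i + G *ᵥ w i))
    (hw : ∀ N, ∑ j ∈ Finset.range N, ‖w j‖ ^ 2 ≤ α) :
    ∀ N, ∑ i ∈ Finset.range N, (x i : Fin n → ℝ) ⬝ᵥ Qbar *ᵥ (x i) ≤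
      2 * ‖Qbar‖ * c ^ 2 / (1 - ρ ^ 2) * ‖x 0‖ ^ 2 +
        2 * c ^ 2 * ‖G‖ ^ 2 * ‖Qbar‖ / (1 - ρ) ^ 2 * α := by
  intro N
  have hd : 0 < 1 - ρ := by linarith
  have hd2 : 0 < 1 - ρ ^ 2 := by nlinarith
  have hQn : (0:ℝ) ≤ ‖Qbar‖ := norm_nonneg _
  have hGn : (0:ℝ) ≤ ‖G‖ := norm_nonneg _
  -- the explicit solution
  have hsol : ∀ i, x i = (EuclideanSpace.equiv (Fin n) ℝ).symm (Abar ^ i *ᵥ x 0)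
      + ∑ j ∈ Finset.range i,
        (EuclideanSpace.equiv (Fin n) ℝ).symm ((Abar ^ (i - 1 - j) * G) *ᵥ w j) := by
    intro i
    induction i with
    | zero => simp [pow_zero, Matrix.one_mulVec]
    | succ i ih =>
      rw [hrec i, ih, ← map_sum, ← map_add, ← map_sum, ← map_add]
      congr 1
      show Abar *ᵥ (Abar ^ i *ᵥ x 0 + ∑ j ∈ Finset.range i, (Abar ^ (i - 1 - j) * G) *ᵥ w j)
          + G *ᵥ w i = _
      rw [Matrix.mulVec_add, Finset.sum_range_succ]
      have h1 : Abar *ᵥ (Abar ^ i *ᵥ (x 0 : Fin n → ℝ)) = Abar ^ (i + 1) *ᵥ x 0 := by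
        rw [Matrix.mulVec_mulVec, ← pow_succ']
      have h2 : Abar *ᵥ ∑ j ∈ Finset.range i, (Abar ^ (i - 1 - j) * G) *ᵥ w j
          = ∑ j ∈ Finset.range i, (Abar ^ (i + 1 - 1 - j) * G) *ᵥ w j := by
        have := map_sum Abar.mulVecLin
          (fun j => (Abar ^ (i - 1 - j) * G) *ᵥ (w j : Fin q → ℝ)) (Finset.range i)
        simp only [Matrix.mulVecLin_apply] at this
        rw [this]
        refine Finset.sum_congr rfl fun j hj => ?_
        rw [Matrix.mulVec_mulVec, ← Matrix.mul_assoc, ← pow_succ']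
        have hj' : j < i := Finset.mem_range.mp hj
        have he : i - 1 - j + 1 = i + 1 - 1 - j := by omega
        rw [he]
      rw [h1, h2]
      have h3 : (Abar ^ (i + 1 - 1 - i) * G) *ᵥ (w i : Fin q → ℝ) = G *ᵥ w i := by
        simp
      rw [h3, add_assoc]
  -- bound on ‖x i‖
  have hnorm : ∀ i, ‖x i‖ ≤ c * ρ ^ i * ‖x 0‖
      + ∑ j ∈ Finset.range i, c * ρ ^ (i - 1 - j) * ‖G‖ * ‖w j‖ := by
    intro i
    rw [hsol i]
    calc ‖(EuclideanSpace.equiv (Fin n) ℝ).symm (Abar ^ i *ᵥ x 0)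
          + ∑ j ∈ Finset.range i,
            (EuclideanSpace.equiv (Fin n) ℝ).symm ((Abar ^ (i - 1 - j) * G) *ᵥ w j)‖
        ≤ ‖(EuclideanSpace.equiv (Fin n) ℝ).symm (Abar ^ i *ᵥ x 0)‖
          + ∑ j ∈ Finset.range i,
            ‖(EuclideanSpace.equiv (Fin n) ℝ).symm ((Abar ^ (i - 1 - j) * G) *ᵥ w j)‖ :=
          (norm_add_le _ _).trans (by gcongr; exact norm_sum_le _ _)
      _ ≤ c * ρ ^ i * ‖x 0‖ + ∑ j ∈ Finset.range i, c * ρ ^ (i - 1 - j) * ‖G‖ * ‖w j‖ := by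
          gcongr with j hj
          · calc ‖(EuclideanSpace.equiv (Fin n) ℝ).symm (Abar ^ i *ᵥ x 0)‖
                ≤ ‖Abar ^ i‖ * ‖x 0‖ := (Abar ^ i).l2_opNorm_mulVec (x 0)
              _ ≤ c * ρ ^ i * ‖x 0‖ := by gcongr; exact hpow i
          · calc ‖(EuclideanSpace.equiv (Fin n) ℝ).symm ((Abar ^ (i - 1 - j) * G) *ᵥ w j)‖
                ≤ ‖Abar ^ (i - 1 - j) * G‖ * ‖w j‖ :=
                  (Abar ^ (i - 1 - j) * G).l2_opNorm_mulVec (w j)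
              _ ≤ (‖Abar ^ (i - 1 - j)‖ * ‖G‖) * ‖w j‖ := by
                  gcongr
                  exact Matrix.l2_opNorm_mul _ _
              _ ≤ c * ρ ^ (i - 1 - j) * ‖G‖ * ‖w j‖ := by
                  apply mul_le_mul_of_nonneg_right _ (norm_nonneg _)
                  exact mul_le_mul_of_nonneg_right (hpow _) hGn
  -- squared bound
  have hsq : ∀ i, ‖x i‖ ^ 2 ≤ 2 * c ^ 2 * (ρ ^ 2) ^ i * ‖x 0‖ ^ 2
      + 2 * c ^ 2 * ‖G‖ ^ 2 * (1 / (1 - ρ)) *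
        ∑ j ∈ Finset.range i, ρ ^ (i - 1 - j) * ‖w j‖ ^ 2 := by
    intro i
    have hA : (0:ℝ) ≤ c * ρ ^ i * ‖x 0‖ := by positivity
    have hB : (0:ℝ) ≤ ∑ j ∈ Finset.range i, c * ρ ^ (i - 1 - j) * ‖G‖ * ‖w j‖ := by
      apply Finset.sum_nonneg; intro j _; positivity
    have h1 : ‖x i‖ ^ 2 ≤ (c * ρ ^ i * ‖x 0‖
        + ∑ j ∈ Finset.range i, c * ρ ^ (i - 1 - j) * ‖G‖ * ‖w j‖) ^ 2 := by
      apply pow_le_pow_left₀ (norm_nonneg _) (hnorm i)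
    have h2 : (c * ρ ^ i * ‖x 0‖
        + ∑ j ∈ Finset.range i, c * ρ ^ (i - 1 - j) * ‖G‖ * ‖w j‖) ^ 2
        ≤ 2 * (c * ρ ^ i * ‖x 0‖) ^ 2
          + 2 * (∑ j ∈ Finset.range i, c * ρ ^ (i - 1 - j) * ‖G‖ * ‖w j‖) ^ 2 := by
      nlinarith [sq_nonneg (c * ρ ^ i * ‖x 0‖
        - ∑ j ∈ Finset.range i, c * ρ ^ (i - 1 - j) * ‖G‖ * ‖w j‖)]
    -- Cauchy-Schwarz on the convolution term
    have h3 : (∑ j ∈ Finset.range i, ρ ^ (i - 1 - j) * ‖w j‖) ^ 2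
        ≤ (∑ j ∈ Finset.range i, ρ ^ (i - 1 - j)) *
          ∑ j ∈ Finset.range i, ρ ^ (i - 1 - j) * ‖w j‖ ^ 2 := by
      apply Finset.sum_sq_le_sum_mul_sum_of_sq_eq_mul
      · intro j _; positivity
      · intro j _; positivity
      · intro j _; ring
    have h4 : (∑ j ∈ Finset.range i, ρ ^ (i - 1 - j)) ≤ 1 / (1 - ρ) := by
      rw [Finset.sum_range_reflect (fun k => ρ ^ k) i]
      exact geo_le hρ0.le hρ1 i
    have h5 : (∑ j ∈ Finset.range i, c * ρ ^ (i - 1 - j) * ‖G‖ * ‖w j‖) ^ 2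
        ≤ c ^ 2 * ‖G‖ ^ 2 * ((1 / (1 - ρ)) *
            ∑ j ∈ Finset.range i, ρ ^ (i - 1 - j) * ‖w j‖ ^ 2) := by
      have heq : ∑ j ∈ Finset.range i, c * ρ ^ (i - 1 - j) * ‖G‖ * ‖w j‖
          = c * ‖G‖ * ∑ j ∈ Finset.range i, ρ ^ (i - 1 - j) * ‖w j‖ := by
        rw [Finset.mul_sum]; apply Finset.sum_congr rfl; intro j _; ring
      rw [heq, mul_pow]
      have hsum2 : (0:ℝ) ≤ ∑ j ∈ Finset.range i, ρ ^ (i - 1 - j) * ‖w j‖ ^ 2 := by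
        apply Finset.sum_nonneg; intro j _; positivity
      calc (c * ‖G‖) ^ 2 * (∑ j ∈ Finset.range i, ρ ^ (i - 1 - j) * ‖w j‖) ^ 2
          ≤ (c * ‖G‖) ^ 2 * ((∑ j ∈ Finset.range i, ρ ^ (i - 1 - j)) *
              ∑ j ∈ Finset.range i, ρ ^ (i - 1 - j) * ‖w j‖ ^ 2) := by
            exact mul_le_mul_of_nonneg_left h3 (by positivity)
        _ ≤ (c * ‖G‖) ^ 2 * ((1 / (1 - ρ)) *
              ∑ j ∈ Finset.range i, ρ ^ (i - 1 - j) * ‖w j‖ ^ 2) := by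
            gcongr
        _ = c ^ 2 * ‖G‖ ^ 2 * ((1 / (1 - ρ)) *
              ∑ j ∈ Finset.range i, ρ ^ (i - 1 - j) * ‖w j‖ ^ 2) := by ring
    calc ‖x i‖ ^ 2 ≤ 2 * (c * ρ ^ i * ‖x 0‖) ^ 2
          + 2 * (∑ j ∈ Finset.range i, c * ρ ^ (i - 1 - j) * ‖G‖ * ‖w j‖) ^ 2 :=
        h1.trans h2
      _ ≤ 2 * (c * ρ ^ i * ‖x 0‖) ^ 2 + 2 * (c ^ 2 * ‖G‖ ^ 2 * ((1 / (1 - ρ)) *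
            ∑ j ∈ Finset.range i, ρ ^ (i - 1 - j) * ‖w j‖ ^ 2)) := by
          gcongr
      _ = 2 * c ^ 2 * (ρ ^ 2) ^ i * ‖x 0‖ ^ 2
          + 2 * c ^ 2 * ‖G‖ ^ 2 * (1 / (1 - ρ)) *
            ∑ j ∈ Finset.range i, ρ ^ (i - 1 - j) * ‖w j‖ ^ 2 := by
          rw [show ((ρ ^ 2) ^ i : ℝ) = (ρ ^ i) ^ 2 by rw [← pow_mul, ← pow_mul']]
          ring
  -- quadratic form bound
  have hquad : ∀ i, (x i : Fin n → ℝ) ⬝ᵥ Qbar *ᵥ (x i) ≤ ‖Qbar‖ * ‖x i‖ ^ 2 := by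
    intro i
    have h1 : (x i : Fin n → ℝ) ⬝ᵥ Qbar *ᵥ (x i)
        = (inner ℝ (x i) ((EuclideanSpace.equiv (Fin n) ℝ).symm (Qbar *ᵥ x i)) : ℝ) := by
      simp [PiLp.inner_apply, dotProduct, RCLike.inner_apply, mul_comm]
    rw [h1]
    calc (inner ℝ (x i) ((EuclideanSpace.equiv (Fin n) ℝ).symm (Qbar *ᵥ x i)) : ℝ)
        ≤ ‖x i‖ * ‖(EuclideanSpace.equiv (Fin n) ℝ).symm (Qbar *ᵥ x i)‖ :=
        real_inner_le_norm _ _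
      _ ≤ ‖x i‖ * (‖Qbar‖ * ‖x i‖) := by
          gcongr
          exact Qbar.l2_opNorm_mulVec (x i)
      _ = ‖Qbar‖ * ‖x i‖ ^ 2 := by ring
  -- the double-sum (convolution) bound
  have hD : ∑ i ∈ Finset.range N, ∑ j ∈ Finset.range i, ρ ^ (i - 1 - j) * ‖w j‖ ^ 2
      ≤ (1 / (1 - ρ)) * α := by
    have hswap : ∑ i ∈ Finset.range N, ∑ j ∈ Finset.range i, ρ ^ (i - 1 - j) * ‖w j‖ ^ 2
        = ∑ j ∈ Finset.range N, ∑ i ∈ Finset.Ico (j + 1) N, ρ ^ (i - 1 - j) * ‖w j‖ ^ 2 := by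
      simp only [← Nat.Ico_zero_eq_range]
      rw [← Finset.sum_Ico_Ico_comm' 0 N (fun j i => ρ ^ (i - 1 - j) * ‖w j‖ ^ 2)]
    rw [hswap]
    have hinner : ∀ j, ∑ i ∈ Finset.Ico (j + 1) N, ρ ^ (i - 1 - j) * ‖w j‖ ^ 2
        ≤ (1 / (1 - ρ)) * ‖w j‖ ^ 2 := by
      intro j
      have : ∑ i ∈ Finset.Ico (j + 1) N, ρ ^ (i - 1 - j) * ‖w j‖ ^ 2
          = (∑ k ∈ Finset.range (N - (j + 1)), ρ ^ k) * ‖w j‖ ^ 2 := by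
        rw [Finset.sum_Ico_eq_sum_range, Finset.sum_mul]
        apply Finset.sum_congr rfl
        intro k _
        congr 2
        omega
      rw [this]
      exact mul_le_mul_of_nonneg_right (geo_le hρ0.le hρ1 _) (by positivity)
    calc ∑ j ∈ Finset.range N, ∑ i ∈ Finset.Ico (j + 1) N, ρ ^ (i - 1 - j) * ‖w j‖ ^ 2
        ≤ ∑ j ∈ Finset.range N, (1 / (1 - ρ)) * ‖w j‖ ^ 2 :=
        Finset.sum_le_sum fun j _ => hinner j
      _ = (1 / (1 - ρ)) * ∑ j ∈ Finset.range N, ‖w j‖ ^ 2 := by rw [Finset.mul_sum]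
      _ ≤ (1 / (1 - ρ)) * α := by gcongr; exact hw N
  -- geometric bound for the homogeneous part
  have hGeo2 : ∑ i ∈ Finset.range N, (ρ ^ 2) ^ i ≤ 1 / (1 - ρ ^ 2) :=
    geo_le (by positivity) (by nlinarith) N
  -- put everything together
  calc ∑ i ∈ Finset.range N, (x i : Fin n → ℝ) ⬝ᵥ Qbar *ᵥ (x i)
      ≤ ∑ i ∈ Finset.range N, ‖Qbar‖ * (2 * c ^ 2 * (ρ ^ 2) ^ i * ‖x 0‖ ^ 2
          + 2 * c ^ 2 * ‖G‖ ^ 2 * (1 / (1 - ρ)) *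
            ∑ j ∈ Finset.range i, ρ ^ (i - 1 - j) * ‖w j‖ ^ 2) := by
        apply Finset.sum_le_sum
        intro i _
        exact (hquad i).trans (by gcongr; exact hsq i)
    _ = ‖Qbar‖ * 2 * c ^ 2 * ‖x 0‖ ^ 2 * (∑ i ∈ Finset.range N, (ρ ^ 2) ^ i)
        + ‖Qbar‖ * 2 * c ^ 2 * ‖G‖ ^ 2 * (1 / (1 - ρ)) *
          (∑ i ∈ Finset.range N, ∑ j ∈ Finset.range i, ρ ^ (i - 1 - j) * ‖w j‖ ^ 2) := by
        have e1 : ∀ i, ‖Qbar‖ * (2 * c ^ 2 * (ρ ^ 2) ^ i * ‖x 0‖ ^ 2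
            + 2 * c ^ 2 * ‖G‖ ^ 2 * (1 / (1 - ρ)) *
              ∑ j ∈ Finset.range i, ρ ^ (i - 1 - j) * ‖w j‖ ^ 2)
            = (‖Qbar‖ * 2 * c ^ 2 * ‖x 0‖ ^ 2) * (ρ ^ 2) ^ i
              + (‖Qbar‖ * 2 * c ^ 2 * ‖G‖ ^ 2 * (1 / (1 - ρ))) *
                ∑ j ∈ Finset.range i, ρ ^ (i - 1 - j) * ‖w j‖ ^ 2 := fun i => by ring
        rw [Finset.sum_congr rfl (fun i _ => e1 i), Finset.sum_add_distrib,
          ← Finset.mul_sum, ← Finset.mul_sum]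
    _ ≤ ‖Qbar‖ * 2 * c ^ 2 * ‖x 0‖ ^ 2 * (1 / (1 - ρ ^ 2))
        + ‖Qbar‖ * 2 * c ^ 2 * ‖G‖ ^ 2 * (1 / (1 - ρ)) * ((1 / (1 - ρ)) * α) := by
        apply add_le_add
        · exact mul_le_mul_of_nonneg_left hGeo2 (by positivity)
        · exact mul_le_mul_of_nonneg_left hD (by positivity)
    _ = 2 * ‖Qbar‖ * c ^ 2 / (1 - ρ ^ 2) * ‖x 0‖ ^ 2
        + 2 * c ^ 2 * ‖G‖ ^ 2 * ‖Qbar‖ / (1 - ρ) ^ 2 * α := by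
        field_simp
end
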